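/- Let X be a d-space such that for every closed set A ⊆ X and every nonempty compact saturated set K ⊆ X, the downward closure ↓(A ∩ K) in the specialization order is closed. Then X is well-filtered. -/

import Mathlib

open Set Topology

universe u

variable {X : Type u}

/-- Specialization order: `x ≤ y` iff `x ∈ closure {y}`. -/
def specLE [TopologicalSpace X] (x y : X) : Prop := x ∈ closure ({y} : Set X)

/-- Directed subset w.r.t. the specialization order. -/
def dirOn [TopologicalSpace X] (D : Set X) : Prop :=
  D.Nonempty ∧ ∀ a ∈ D, ∀ b ∈ D, ∃ c ∈ D, specLE a c ∧ specLE b c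

/-- Downward closure w.r.t. the specialization order. -/
def dClo [TopologicalSpace X] (A : Set X) : Set X := {x | ∃ a ∈ A, specLE x a}

/-- Upward closure w.r.t. the specialization order. -/
def uClo [TopologicalSpace X] (A : Set X) : Set X := {x | ∃ a ∈ A, specLE a x}

/-- `x` is a supremum of `D` w.r.t. the specialization order. -/
def IsSupOf [TopologicalSpace X] (D : Set X) (x : X) : Prop :=
  (∀ d ∈ D, specLE d x) ∧ ∀ y, (∀ d ∈ D, specLE d y) → specLE x y

/-- A d-space: a T0 space in which every directed set (for the specialization order)
has a supremum, and every open set is inaccessible by directed suprema. -/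
def IsDSpace (X : Type u) [TopologicalSpace X] : Prop :=
  T0Space X ∧ (∀ D : Set X, dirOn D → ∃ x, IsSupOf D x) ∧
    ∀ D : Set X, dirOn D → ∀ x, IsSupOf D x →
      ∀ U : Set X, IsOpen U → x ∈ U → (D ∩ U).Nonempty

/-- A set is saturated if it is the intersection of the open sets containing it. -/
def IsSat [TopologicalSpace X] (A : Set X) : Prop :=
  A = ⋂₀ {U : Set X | IsOpen U ∧ A ⊆ U}

/-- The collection of nonempty compact saturated subsets. -/
def KSet (X : Type u) [TopologicalSpace X] : Set (Set X) :=
  {K | K.Nonempty ∧ IsCompact K ∧ IsSat K}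

/-- A filtered family of sets: nonempty, and every two members contain a common member. -/
def FiltFam [TopologicalSpace X] (𝒦 : Set (Set X)) : Prop :=
  𝒦.Nonempty ∧ ∀ K₁ ∈ 𝒦, ∀ K₂ ∈ 𝒦, ∃ K₃ ∈ 𝒦, K₃ ⊆ K₁ ∧ K₃ ⊆ K₂

/-- Well-filtered space. -/
def IsWF (X : Type u) [TopologicalSpace X] : Prop :=
  T0Space X ∧ ∀ 𝒦 : Set (Set X), 𝒦 ⊆ KSet X → FiltFam 𝒦 →
    ∀ U : Set X, IsOpen U → ⋂₀ 𝒦 ⊆ U → ∃ K ∈ 𝒦, K ⊆ U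

/-- Sober space: every irreducible closed subset is the closure of a unique point. -/
def IsSober (X : Type u) [TopologicalSpace X] : Prop :=
  ∀ A : Set X, IsIrreducible A → IsClosed A → ∃! x : X, A = closure {x}

/-- `V` is way below `U` in the lattice of open sets: every open cover of `U`
has a finite subfamily covering `V`. -/
def wayBelow [TopologicalSpace X] (V U : Set X) : Prop :=
  ∀ 𝒞 : Set (Set X), (∀ W ∈ 𝒞, IsOpen W) → U ⊆ ⋃₀ 𝒞 →
    ∃ 𝒟 ⊆ 𝒞, 𝒟.Finite ∧ V ⊆ ⋃₀ 𝒟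

/-- Core compact space. -/
def CoreCompact (X : Type u) [TopologicalSpace X] : Prop :=
  ∀ (x : X) (U : Set X), IsOpen U → x ∈ U →
    ∃ V : Set X, IsOpen V ∧ x ∈ V ∧ wayBelow V U

/-- The underlying type of the Smyth power space: nonempty compact saturated subsets. -/
abbrev KS (X : Type u) [TopologicalSpace X] : Type u :=
  {K : Set X // K.Nonempty ∧ IsCompact K ∧ IsSat K}

/-- The upper Vietoris topology on `KS X`, generated by the sets
`□U = {K | K ⊆ U}` for `U` open; this makes `KS X` the Smyth power space `P_S(X)`. -/
instance (X : Type u) [TopologicalSpace X] : TopologicalSpace (KS X) :=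
  TopologicalSpace.generateFrom
    {S | ∃ U : Set X, IsOpen U ∧ S = {K : KS X | (K : Set X) ⊆ U}}

/-- Rudin set: a nonempty closed set that is a minimal closed set meeting all
members of some filtered family of nonempty compact saturated sets. -/
def RudinSet [TopologicalSpace X] (A : Set X) : Prop :=
  IsClosed A ∧ A.Nonempty ∧ ∃ 𝒦 : Set (Set X), 𝒦 ⊆ KSet X ∧ FiltFam 𝒦 ∧
    (∀ K ∈ 𝒦, (K ∩ A).Nonempty) ∧
    ∀ B : Set X, IsClosed B → B ⊆ A → (∀ K ∈ 𝒦, (K ∩ B).Nonempty) → B = A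

/-- Well-filtered determined (WD) set. -/
def IsWDSet [TopologicalSpace X] (A : Set X) : Prop :=
  IsClosed A ∧ A.Nonempty ∧ ∀ (Y : Type u) [TopologicalSpace Y], IsWF Y →
    ∀ f : X → Y, Continuous f → ∃ y : Y, closure (f '' A) = closure {y}

/-- Rudin space: every irreducible closed set is a Rudin set. -/
def RudinSpace (X : Type u) [TopologicalSpace X] : Prop :=
  ∀ A : Set X, IsClosed A → IsIrreducible A → RudinSet A

/-- WD space: every irreducible closed set is a WD set. -/
def WDSpace (X : Type u) [TopologicalSpace X] : Prop :=
  ∀ A : Set X, IsClosed A → IsIrreducible A → IsWDSet A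

/-- DC space: every irreducible closed set is the closure of a directed set. -/
def DCSpace (X : Type u) [TopologicalSpace X] : Prop :=
  ∀ A : Set X, IsClosed A → IsIrreducible A → ∃ D : Set X, dirOn D ∧ A = closure D

/-- Xi–Lawson: a d-space in which `↓(A ∩ K)` is closed for every closed `A`
and every nonempty compact saturated `K` is well-filtered. -/
theorem stmt1 {X : Type u} [TopologicalSpace X] (hX : IsDSpace X)
    (h : ∀ A K : Set X, IsClosed A → K ∈ KSet X → IsClosed (dClo (A ∩ K))) :
    IsWF X := by
  obtain ⟨hT0, hdsup, hdopen⟩ := hX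
  refine ⟨hT0, fun 𝒦 h𝒦 hFilt U hU hsub => ?_⟩
  by_contra hcon
  push_neg at hcon
  -- the set of closed subsets of Uᶜ meeting every member of 𝒦
  set S : Set (Set X) :=
    {B | IsClosed B ∧ B ⊆ Uᶜ ∧ ∀ K ∈ 𝒦, (K ∩ B).Nonempty} with hS
  have hUcS : Uᶜ ∈ S := by
    refine ⟨hU.isClosed_compl, le_refl _, fun K hK => ?_⟩
    obtain ⟨x, hxK, hxU⟩ := not_subset.mp (hcon K hK)
    exact ⟨x, hxK, hxU⟩
  -- Zorn: get a minimal element of S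
  have hZ : ∀ c ⊆ S, IsChain (· ⊆ ·) c → c.Nonempty → ∃ lb ∈ S, ∀ s ∈ c, lb ⊆ s := by
    intro c hcS hchain hcne
    refine ⟨⋂₀ c, ⟨isClosed_sInter fun B hB => (hcS hB).1,
      (sInter_subset_of_mem hcne.choose_spec).trans (hcS hcne.choose_spec).2.1,
      fun K hK => ?_⟩, fun B hB => sInter_subset_of_mem hB⟩
    obtain ⟨-, hKc, -⟩ := h𝒦 hK
    have hfin : ∀ u : Finset c, (K ∩ ⋂ B ∈ u, (B : Set X)).Nonempty := by
      intro u
      rcases u.eq_empty_or_nonempty with rfl | hune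
      · simpa using (h𝒦 hK).1
      · -- a finite nonempty subset of a chain has a least element
        obtain ⟨m, hmu, hmin⟩ := u.exists_minimal hune
        have hle : ∀ B ∈ u, (m : Set X) ⊆ (B : Set X) := by
          intro B hB
          rcases eq_or_ne m B with rfl | hne
          · exact le_refl _
          · rcases hchain m.2 B.2 (fun e => hne (Subtype.ext e)) with h1 | h1
            · exact h1
            · rcases eq_or_ne (B : Set X) (m : Set X) with he | hne2
              · exact he.ge
              · exact absurd (lt_of_le_of_ne h1 fun e => hne (Subtype.ext e.symm))
                  (by simpa [Subtype.ext_iff] using (fun hlt : B < m => hlt.2 (hmin hB hlt.1)))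
        obtain ⟨x, hxK, hxm⟩ := (hcS m.2).2.2 K hK
        exact ⟨x, hxK, by simpa using fun B hB => hle B hB hxm⟩
    have := hKc.inter_iInter_nonempty (fun B : c => (B : Set X))
      (fun B => (hcS B.2).1) hfin
    obtain ⟨x, hxK, hx⟩ := this
    refine ⟨x, hxK, ?_⟩
    intro B hB
    simp only [mem_iInter] at hx
    exact hx ⟨B, hB⟩
  obtain ⟨A₀, -, hA₀S, hA₀min⟩ := zorn_superset_nonempty S hZ _ hUcS
  obtain ⟨hA₀cl, hA₀U, hA₀K⟩ := hA₀S
  -- closed sets are down-closed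
  have hdown : ∀ {B : Set X}, IsClosed B → ∀ {x a : X}, a ∈ B → specLE x a → x ∈ B := by
    intro B hB x a haB hxa
    exact closure_minimal (singleton_subset_iff.2 haB) hB hxa
  -- minimality gives A₀ = ↓(A₀ ∩ K) for every K ∈ 𝒦
  have hkey : ∀ K ∈ 𝒦, A₀ ⊆ dClo (A₀ ∩ K) := by
    intro K hK
    have hBcl : IsClosed (dClo (A₀ ∩ K)) := h A₀ K hA₀cl (h𝒦 hK)
    have hBsub : dClo (A₀ ∩ K) ⊆ A₀ := by
      rintro x ⟨a, ⟨haA, -⟩, hxa⟩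
      exact hdown hA₀cl haA hxa
    have hBS : dClo (A₀ ∩ K) ∈ S := by
      refine ⟨hBcl, hBsub.trans hA₀U, fun K' hK' => ?_⟩
      obtain ⟨K₃, hK₃, hK₃K, hK₃K'⟩ := hFilt.2 K hK K' hK'
      obtain ⟨x, hxK₃, hxA₀⟩ := hA₀K K₃ hK₃
      exact ⟨x, hK₃K' hxK₃, x, ⟨hxA₀, hK₃K hxK₃⟩, subset_closure rfl⟩
    exact hA₀min hBS hBsub
  -- the specialization preorder
  letI P : Preorder X :=
    { le := specLE
      le_refl := fun x => subset_closure rfl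
      le_trans := fun x y z hxy hyz =>
        closure_minimal (singleton_subset_iff.2 hyz) isClosed_closure hxy }
  -- chains in A₀ have upper bounds in A₀ (d-space)
  have hchainub : ∀ c ⊆ A₀, IsChain (· ≤ ·) c → ∀ y ∈ c, ∃ ub ∈ A₀, ∀ z ∈ c, z ≤ ub := by
    intro c hcA₀ hchain y hy
    have hdir : dirOn c := by
      refine ⟨⟨y, hy⟩, fun a ha b hb => ?_⟩
      rcases eq_or_ne a b with rfl | hne
      · exact ⟨a, ha, le_refl a, le_refl a⟩
      · rcases hchain ha hb hne with h1 | h1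
        · exact ⟨b, hb, h1, le_refl b⟩
        · exact ⟨a, ha, le_refl a, h1⟩
    obtain ⟨x, hxsup⟩ := hdsup c hdir
    refine ⟨x, ?_, hxsup.1⟩
    by_contra hxA₀
    obtain ⟨d, hdc, hd⟩ := hdopen c hdir x hxsup A₀ᶜ hA₀cl.isOpen_compl hxA₀
    exact hd (hcA₀ hdc)
  -- get a maximal element of A₀
  obtain ⟨K₀, hK₀⟩ := hFilt.1
  obtain ⟨x₀, -, hx₀A₀⟩ := hA₀K K₀ hK₀
  obtain ⟨m, -, hm⟩ := zorn_le_nonempty₀ A₀ hchainub x₀ hx₀A₀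
  -- m belongs to every K ∈ 𝒦
  haveI := hT0
  have hmK : ∀ K ∈ 𝒦, m ∈ K := by
    intro K hK
    obtain ⟨a, ⟨haA₀, haK⟩, hma⟩ := hkey K hK hm.1
    have : a = m := by
      have h2 : a ≤ m := hm.2 haA₀ hma
      exact (((specializes_iff_mem_closure.mpr h2).antisymm
        (specializes_iff_mem_closure.mpr hma)).eq).symm
    exact this ▸ haK
  exact hA₀U hm.1 (hsub fun K hK => hmK K hK)
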